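/- For every even d ≥ 2, the expected Euler characteristic curve per cell of the random permutahedral complex vanishes at p = 1/2; explicitly, Σ_{k=0}^d (-1)^k c_k(d) (1 - 2^{-(d+1-k)}) = 0, where c_k(d) = (number of surjections from Fin(d+1) onto Fin(d+1-k)) / (d+1-k). -/

import Mathlib

open Finset

namespace PermEC

/-- Algebraic surjection count. -/
noncomputable def S (k m : ℕ) : ℝ :=
  ∑ j ∈ range (m + 1), (-1 : ℝ) ^ (m + j) * (m.choose j : ℝ) * (j : ℝ) ^ k

lemma alt_choose (m : ℕ) (hm : m ≠ 0) :
    ∑ j ∈ range (m + 1), (-1 : ℝ) ^ j * (m.choose j : ℝ) = 0 := by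
  have h := Int.alternating_sum_range_choose_of_ne hm
  have := congrArg (fun z : ℤ => (z : ℝ)) h
  push_cast at this
  simpa using this

lemma choose_absorb (M t : ℕ) :
    ((M + 1).choose (t + 1) : ℝ) * ((t : ℝ) + 1) = ((M : ℝ) + 1) * (M.choose t : ℝ) := by
  have h := Nat.add_one_mul_choose_eq M t
  have h2 := congrArg (fun z : ℕ => (z : ℝ)) h
  push_cast at h2
  linarith

lemma findiff (m : ℕ) : ∀ k, k < m →
    ∑ j ∈ range (m + 1), (-1 : ℝ) ^ j * (m.choose j : ℝ) * (j : ℝ) ^ k = 0 := by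
  induction m with
  | zero => omega
  | succ M ih =>
    intro k hk
    match k with
    | 0 =>
      simpa using alt_choose (M + 1) (Nat.succ_ne_zero M)
    | (k' + 1) =>
      have hsum : ∑ t ∈ range (M + 1),
          (-1 : ℝ) ^ t * (M.choose t : ℝ) * ((t : ℝ) + 1) ^ k' = 0 := by
        have hexp : ∀ t ∈ range (M + 1),
            (-1 : ℝ) ^ t * (M.choose t : ℝ) * ((t : ℝ) + 1) ^ k'
            = ∑ s ∈ range (k' + 1), (k'.choose s : ℝ) *
                ((-1 : ℝ) ^ t * (M.choose t : ℝ) * (t : ℝ) ^ s) := by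
          intro t _
          rw [add_pow, Finset.mul_sum]
          refine Finset.sum_congr rfl fun s _ => ?_
          ring
        rw [Finset.sum_congr rfl hexp, Finset.sum_comm]
        refine Finset.sum_eq_zero fun s hs => ?_
        rw [← Finset.mul_sum]
        have hsM : s < M := by
          have := Finset.mem_range.mp hs
          omega
        rw [ih s hsM, mul_zero]
      rw [Finset.sum_range_succ']
      have h0 : (-1 : ℝ) ^ 0 * ((M + 1).choose 0 : ℝ) * ((0 : ℕ) : ℝ) ^ (k' + 1) = 0 := by
        simp
      rw [h0, add_zero]
      have hterm : ∀ t ∈ range (M + 1),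
          (-1 : ℝ) ^ (t + 1) * ((M + 1).choose (t + 1) : ℝ) * ((t + 1 : ℕ) : ℝ) ^ (k' + 1)
          = -(((M : ℝ) + 1) * ((-1 : ℝ) ^ t * (M.choose t : ℝ) * ((t : ℝ) + 1) ^ k')) := by
        intro t _
        have e1 : ((t + 1 : ℕ) : ℝ) ^ (k' + 1) = ((t : ℝ) + 1) ^ k' * ((t : ℝ) + 1) := by
          push_cast; ring
        rw [e1]
        linear_combination ((-1 : ℝ) ^ (t + 1) * ((t : ℝ) + 1) ^ k') * choose_absorb M t
      rw [Finset.sum_congr rfl hterm]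
      rw [Finset.sum_neg_distrib, ← Finset.mul_sum, hsum, mul_zero, neg_zero]


lemma S_eq_zero_of_lt {k m : ℕ} (h : k < m) : S k m = 0 := by
  unfold S
  have : ∀ j ∈ range (m + 1), (-1 : ℝ) ^ (m + j) * (m.choose j : ℝ) * (j : ℝ) ^ k
      = (-1 : ℝ) ^ m * ((-1 : ℝ) ^ j * (m.choose j : ℝ) * (j : ℝ) ^ k) := by
    intro j _; rw [pow_add]; ring
  rw [Finset.sum_congr rfl this, ← Finset.mul_sum, findiff m k h, mul_zero]

lemma S_zero_zero : S 0 0 = 1 := by simp [S]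

lemma S_zero_right {k : ℕ} (hk : k ≠ 0) : S k 0 = 0 := by
  simp [S, zero_pow hk]

/-- Key shift identity. -/
lemma S_shift (k M : ℕ) :
    ∑ t ∈ range (M + 1), (-1 : ℝ) ^ (M + t) * (M.choose t : ℝ) * ((t : ℝ) + 1) ^ k
      = S k (M + 1) + S k M := by
  have hA : S k (M + 1) =
      (∑ t ∈ range (M + 1), (-1 : ℝ) ^ (M + t) * ((M.choose t : ℝ) + (M.choose (t + 1) : ℝ))
          * ((t : ℝ) + 1) ^ k) + (-1 : ℝ) ^ (M + 1) * ((0 : ℝ)) ^ k := by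
    unfold S
    rw [Finset.sum_range_succ']
    congr 1
    · refine Finset.sum_congr rfl fun t _ => ?_
      have hsgn : (-1 : ℝ) ^ (M + 1 + (t + 1)) = (-1 : ℝ) ^ (M + t) := by
        have : M + 1 + (t + 1) = (M + t) + 2 := by ring
        rw [this, pow_add]; norm_num
      rw [hsgn, Nat.choose_succ_succ]
      push_cast
      ring
    · simp
  have hB : S k M = (-1 : ℝ) ^ M * ((0 : ℝ)) ^ k
      - ∑ t ∈ range M, (-1 : ℝ) ^ (M + t) * (M.choose (t + 1) : ℝ) * ((t : ℝ) + 1) ^ k := by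
    unfold S
    rw [Finset.sum_range_succ']
    have : ∀ t ∈ range M, (-1 : ℝ) ^ (M + (t + 1)) * (M.choose (t + 1) : ℝ) * ((t + 1 : ℕ) : ℝ) ^ k
        = -((-1 : ℝ) ^ (M + t) * (M.choose (t + 1) : ℝ) * ((t : ℝ) + 1) ^ k) := by
      intro t _
      have : M + (t + 1) = (M + t) + 1 := by ring
      rw [this, pow_succ]
      push_cast
      ring
    rw [Finset.sum_congr rfl this, Finset.sum_neg_distrib]
    simp only [Nat.choose_zero_right, Nat.cast_one, mul_one, Nat.cast_zero]
    ring
  have hBext : ∑ t ∈ range (M + 1), (-1 : ℝ) ^ (M + t) * (M.choose (t + 1) : ℝ) * ((t : ℝ) + 1) ^ k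
      = ∑ t ∈ range M, (-1 : ℝ) ^ (M + t) * (M.choose (t + 1) : ℝ) * ((t : ℝ) + 1) ^ k := by
    rw [Finset.sum_range_succ]
    simp [Nat.choose_succ_self]
  have hsplit : ∑ t ∈ range (M + 1), (-1 : ℝ) ^ (M + t) * ((M.choose t : ℝ) + (M.choose (t + 1) : ℝ))
          * ((t : ℝ) + 1) ^ k
      = ∑ t ∈ range (M + 1), (-1 : ℝ) ^ (M + t) * (M.choose t : ℝ) * ((t : ℝ) + 1) ^ k
      + ∑ t ∈ range (M + 1), (-1 : ℝ) ^ (M + t) * (M.choose (t + 1) : ℝ) * ((t : ℝ) + 1) ^ k := by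
    rw [← Finset.sum_add_distrib]
    refine Finset.sum_congr rfl fun t _ => ?_
    ring
  rw [hA, hB, hsplit, hBext]
  have hpow : (-1 : ℝ) ^ (M + 1) * ((0 : ℝ)) ^ k + (-1 : ℝ) ^ M * ((0 : ℝ)) ^ k = 0 := by
    rw [pow_succ]; ring
  linarith [hpow]

/-- Recurrence: S (k+1) (M+1) = (M+1) * (S k (M+1) + S k M). -/
lemma S_rec (k M : ℕ) : S (k + 1) (M + 1) = ((M : ℝ) + 1) * (S k (M + 1) + S k M) := by
  rw [← S_shift]
  unfold S
  rw [Finset.sum_range_succ']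
  have h0 : (-1 : ℝ) ^ (M + 1 + 0) * ((M + 1).choose 0 : ℝ) * ((0 : ℕ) : ℝ) ^ (k + 1) = 0 := by
    simp
  rw [h0, add_zero, Finset.mul_sum]
  refine Finset.sum_congr rfl fun t _ => ?_
  have hch : ((M + 1).choose (t + 1) : ℝ) * ((t : ℝ) + 1) = ((M : ℝ) + 1) * (M.choose t : ℝ) := by
    have h := Nat.add_one_mul_choose_eq M t
    have h2 := congrArg (fun z : ℕ => (z : ℝ)) h
    push_cast at h2
    linarith
  have hsgn : (-1 : ℝ) ^ (M + 1 + (t + 1)) = (-1 : ℝ) ^ (M + t) := by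
    have : M + 1 + (t + 1) = (M + t) + 2 := by ring
    rw [this, pow_add]; norm_num
  have hc : ((t + 1 : ℕ) : ℝ) ^ (k + 1) = ((t : ℝ) + 1) ^ k * ((t : ℝ) + 1) := by
    push_cast; ring
  rw [hsgn, hc]
  linear_combination ((-1 : ℝ) ^ (M + t) * ((t : ℝ) + 1) ^ k) * hch


/-- Vandermonde-style regrouping. -/
lemma vand_sum (a b : ℕ) (g : ℕ → ℝ) :
    ∑ j ∈ range (a + 1), ∑ l ∈ range (b + 1),
        (a.choose j : ℝ) * (b.choose l : ℝ) * g (j + l)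
      = ∑ s ∈ range (a + b + 1), ((a + b).choose s : ℝ) * g s := by
  have hprod : ∑ j ∈ range (a + 1), ∑ l ∈ range (b + 1),
        (a.choose j : ℝ) * (b.choose l : ℝ) * g (j + l)
      = ∑ p ∈ range (a + 1) ×ˢ range (b + 1),
          (a.choose p.1 : ℝ) * (b.choose p.2 : ℝ) * g (p.1 + p.2) := by
    rw [Finset.sum_product]
  rw [hprod]
  have hmaps : ∀ p ∈ range (a + 1) ×ˢ range (b + 1), p.1 + p.2 ∈ range (a + b + 1) := by
    intro p hp
    rw [Finset.mem_product, Finset.mem_range, Finset.mem_range] at hp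
    rw [Finset.mem_range]
    omega
  rw [← Finset.sum_fiberwise_of_maps_to hmaps]
  refine Finset.sum_congr rfl fun s hs => ?_
  have hfil : ∀ p ∈ (range (a + 1) ×ˢ range (b + 1)).filter (fun p => p.1 + p.2 = s),
      (a.choose p.1 : ℝ) * (b.choose p.2 : ℝ) * g (p.1 + p.2)
      = ((a.choose p.1 * b.choose p.2 : ℕ) : ℝ) * g s := by
    intro p hp
    rw [Finset.mem_filter] at hp
    rw [hp.2]
    push_cast
    ring
  rw [Finset.sum_congr rfl hfil, ← Finset.sum_mul]
  have hcount : ∑ p ∈ (range (a + 1) ×ˢ range (b + 1)).filter (fun p => p.1 + p.2 = s),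
      ((a.choose p.1 * b.choose p.2 : ℕ) : ℝ)
      = (((a + b).choose s : ℕ) : ℝ) := by
    have : ∑ p ∈ (range (a + 1) ×ˢ range (b + 1)).filter (fun p => p.1 + p.2 = s),
        (a.choose p.1 * b.choose p.2) = (a + b).choose s := by
      rw [Nat.add_choose_eq]
      refine Finset.sum_subset ?_ ?_
      · intro p hp
        rw [Finset.mem_filter] at hp
        rw [Finset.HasAntidiagonal.mem_antidiagonal]
        exact hp.2
      · intro p hp hnp
        rw [Finset.HasAntidiagonal.mem_antidiagonal] at hp
        rw [Finset.mem_filter] at hnp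
        have hnotmem : p ∉ range (a + 1) ×ˢ range (b + 1) := fun hmem => hnp ⟨hmem, hp⟩
        rw [Finset.mem_product, Finset.mem_range, Finset.mem_range] at hnotmem
        have : a < p.1 ∨ b < p.2 := by omega
        rcases this with h | h
        · rw [Nat.choose_eq_zero_of_lt h, zero_mul]
        · rw [Nat.choose_eq_zero_of_lt h, mul_zero]
    exact_mod_cast congrArg (fun z : ℕ => (z : ℝ)) this
  rw [hcount]

/-- Convolution identity. -/
lemma S_conv (k a b : ℕ) :
    ∑ i ∈ range (k + 1), (k.choose i : ℝ) * S i a * S (k - i) b = S k (a + b) := by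
  have expand : ∀ i ∈ range (k + 1), (k.choose i : ℝ) * S i a * S (k - i) b
      = ∑ j ∈ range (a + 1), ∑ l ∈ range (b + 1),
          (-1 : ℝ) ^ (a + j) * (a.choose j : ℝ) * ((-1 : ℝ) ^ (b + l) * (b.choose l : ℝ)) *
            ((k.choose i : ℝ) * (j : ℝ) ^ i * (l : ℝ) ^ (k - i)) := by
    intro i _
    unfold S
    rw [mul_assoc, Finset.sum_mul_sum]
    simp only [Finset.mul_sum]
    refine Finset.sum_congr rfl fun j _ => ?_
    refine Finset.sum_congr rfl fun l _ => ?_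
    ring
  rw [Finset.sum_congr rfl expand, Finset.sum_comm]
  have swap2 : ∀ j ∈ range (a + 1), ∑ i ∈ range (k + 1), ∑ l ∈ range (b + 1),
        (-1 : ℝ) ^ (a + j) * (a.choose j : ℝ) * ((-1 : ℝ) ^ (b + l) * (b.choose l : ℝ)) *
          ((k.choose i : ℝ) * (j : ℝ) ^ i * (l : ℝ) ^ (k - i))
      = ∑ l ∈ range (b + 1), (a.choose j : ℝ) * (b.choose l : ℝ) *
          ((-1 : ℝ) ^ (a + j) * (-1 : ℝ) ^ (b + l) * ((j : ℝ) + (l : ℝ)) ^ k) := by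
    intro j _
    rw [Finset.sum_comm]
    refine Finset.sum_congr rfl fun l _ => ?_
    rw [add_pow (j : ℝ) (l : ℝ) k]
    simp only [Finset.mul_sum]
    refine Finset.sum_congr rfl fun i _ => ?_
    ring
  rw [Finset.sum_congr rfl swap2]
  have : ∀ j ∈ range (a + 1), ∑ l ∈ range (b + 1), (a.choose j : ℝ) * (b.choose l : ℝ) *
          ((-1 : ℝ) ^ (a + j) * (-1 : ℝ) ^ (b + l) * ((j : ℝ) + (l : ℝ)) ^ k)
      = ∑ l ∈ range (b + 1), (a.choose j : ℝ) * (b.choose l : ℝ) *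
          ((-1 : ℝ) ^ (a + b) * ((-1 : ℝ) ^ (j + l) * (((j + l : ℕ) : ℝ)) ^ k)) := by
    intro j _
    refine Finset.sum_congr rfl fun l _ => ?_
    have hsgn : (-1 : ℝ) ^ (a + j) * (-1 : ℝ) ^ (b + l)
        = (-1 : ℝ) ^ (a + b) * (-1 : ℝ) ^ (j + l) := by
      rw [← pow_add, ← pow_add]
      congr 1
      ring
    rw [hsgn]
    push_cast
    ring
  rw [Finset.sum_congr rfl this]
  have hv := vand_sum a b (fun s => (-1 : ℝ) ^ (a + b) * ((-1 : ℝ) ^ s * ((s : ℕ) : ℝ) ^ k))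
  rw [hv]
  unfold S
  refine Finset.sum_congr rfl fun s _ => ?_
  rw [pow_add]
  ring


lemma alt_choose_real (m : ℕ) :
    ∑ j ∈ range (m + 1), (-1 : ℝ) ^ j * (m.choose j : ℝ) = if m = 0 then 1 else 0 := by
  have h := @Int.alternating_sum_range_choose m
  have h2 := congrArg (fun z : ℤ => (z : ℝ)) h
  push_cast at h2
  split_ifs with hm
  · subst hm; simp
  · rw [if_neg hm] at h2
    simpa using h2

/-- Binomial inversion: `∑_m C(j,m) S(n,m) = j^n`. -/
lemma sum_choose_S (n j : ℕ) :
    ∑ m ∈ range (j + 1), (j.choose m : ℝ) * S n m = (j : ℝ) ^ n := by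
  have ext1 : ∀ m ∈ range (j + 1), (j.choose m : ℝ) * S n m
      = ∑ i ∈ range (j + 1),
          (j.choose m : ℝ) * ((-1 : ℝ) ^ (m + i) * (m.choose i : ℝ) * (i : ℝ) ^ n) := by
    intro m hm
    rw [Finset.mem_range] at hm
    unfold S
    rw [Finset.mul_sum]
    refine Finset.sum_subset (Finset.range_subset_range.mpr (by omega)) ?_
    intro i hi hnot
    rw [Finset.mem_range] at hnot
    rw [Nat.choose_eq_zero_of_lt (show m < i by omega), Nat.cast_zero]
    ring
  rw [Finset.sum_congr rfl ext1, Finset.sum_comm]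
  have inner : ∀ i ∈ range (j + 1),
      ∑ m ∈ range (j + 1),
          (j.choose m : ℝ) * ((-1 : ℝ) ^ (m + i) * (m.choose i : ℝ) * (i : ℝ) ^ n)
      = (i : ℝ) ^ n * (if i = j then 1 else 0) := by
    intro i hi
    rw [Finset.mem_range] at hi
    have hij : i ≤ j := by omega
    have restrict : ∑ m ∈ range (j + 1),
          (j.choose m : ℝ) * ((-1 : ℝ) ^ (m + i) * (m.choose i : ℝ) * (i : ℝ) ^ n)
        = ∑ m ∈ Finset.Ico i (j + 1),
          (j.choose m : ℝ) * ((-1 : ℝ) ^ (m + i) * (m.choose i : ℝ) * (i : ℝ) ^ n) := by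
      refine (Finset.sum_subset ?_ ?_).symm
      · intro m hm
        rw [Finset.mem_Ico] at hm
        rw [Finset.mem_range]
        omega
      · intro m hm hnot
        rw [Finset.mem_range] at hm
        rw [Finset.mem_Ico] at hnot
        rw [Nat.choose_eq_zero_of_lt (show m < i by omega), Nat.cast_zero]
        ring
    rw [restrict, Finset.sum_Ico_eq_sum_range]
    have hlen : j + 1 - i = (j - i) + 1 := by omega
    rw [hlen]
    have term : ∀ t ∈ range ((j - i) + 1),
        (j.choose (i + t) : ℝ) * ((-1 : ℝ) ^ ((i + t) + i) * ((i + t).choose i : ℝ) * (i : ℝ) ^ n)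
        = (i : ℝ) ^ n * (j.choose i : ℝ) * ((-1 : ℝ) ^ t * ((j - i).choose t : ℝ)) := by
      intro t ht
      rw [Finset.mem_range] at ht
      have hc := Nat.choose_mul (n := j) (by omega : i ≤ i + t)
      have hc2 := congrArg (fun z : ℕ => (z : ℝ)) hc
      push_cast at hc2
      have hsub : i + t - i = t := by omega
      rw [hsub] at hc2
      have hsgn : (-1 : ℝ) ^ ((i + t) + i) = (-1 : ℝ) ^ t := by
        have : (i + t) + i = 2 * i + t := by ring
        rw [this, pow_add, pow_mul]
        norm_num
      rw [hsgn]
      calc (j.choose (i + t) : ℝ) * ((-1 : ℝ) ^ t * ((i + t).choose i : ℝ) * (i : ℝ) ^ n)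
          = ((j.choose (i + t) : ℝ) * ((i + t).choose i : ℝ)) * ((-1 : ℝ) ^ t * (i : ℝ) ^ n) := by
            ring
        _ = ((j.choose i : ℝ) * ((j - i).choose t : ℝ)) * ((-1 : ℝ) ^ t * (i : ℝ) ^ n) := by
            rw [hc2]
        _ = (i : ℝ) ^ n * (j.choose i : ℝ) * ((-1 : ℝ) ^ t * ((j - i).choose t : ℝ)) := by
            ring
    rw [Finset.sum_congr rfl term, ← Finset.mul_sum, alt_choose_real (j - i)]
    by_cases hij2 : i = j
    · rw [if_pos hij2, if_pos (by omega)]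
      subst hij2
      simp
    · rw [if_neg (by omega), if_neg hij2]
      ring
  rw [Finset.sum_congr rfl inner]
  have : ∀ x ∈ range (j + 1), (x : ℝ) ^ n * (if x = j then 1 else 0)
      = if x = j then (x : ℝ) ^ n else 0 := by
    intro x _
    split_ifs <;> ring
  rw [Finset.sum_congr rfl this, Finset.sum_ite_eq' (range (j + 1)) j (fun x => (x : ℝ) ^ n)]
  simp


noncomputable def Phi (k : ℕ) : ℝ := ∑ m ∈ range (k + 1), (-(2 : ℝ)⁻¹) ^ m * S k m

noncomputable def Psi (k : ℕ) : ℝ :=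
  ∑ m ∈ range (k + 2), (-(2 : ℝ)⁻¹) ^ m * ((m : ℝ) + 1) * S k m

lemma Phi_ext (k N : ℕ) (h : k ≤ N) :
    ∑ m ∈ range (N + 1), (-(2 : ℝ)⁻¹) ^ m * S k m = Phi k := by
  unfold Phi
  refine (Finset.sum_subset ?_ ?_).symm
  · exact Finset.range_subset_range.mpr (by omega)
  · intro m hm hnot
    rw [Finset.mem_range] at hm
    rw [Finset.mem_range] at hnot
    rw [S_eq_zero_of_lt (by omega), mul_zero]

lemma Phi_zero : Phi 0 = 1 := by
  unfold Phi
  rw [Finset.sum_range_one, S_zero_zero]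
  norm_num

/-- Regrouping a square double sum by the sum of indices. -/
lemma square_sum (k : ℕ) (F : ℕ → ℝ) (hF : ∀ m, k < m → F m = 0) :
    ∑ a ∈ range (k + 1), ∑ b ∈ range (k + 1), F (a + b)
      = ∑ s ∈ range (k + 2), ((s : ℝ) + 1) * F s := by
  have hprod : ∑ a ∈ range (k + 1), ∑ b ∈ range (k + 1), F (a + b)
      = ∑ p ∈ range (k + 1) ×ˢ range (k + 1), F (p.1 + p.2) := by
    rw [Finset.sum_product]
  rw [hprod]
  have hmaps : ∀ p ∈ range (k + 1) ×ˢ range (k + 1), p.1 + p.2 ∈ range (2 * k + 1) := by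
    intro p hp
    rw [Finset.mem_product, Finset.mem_range, Finset.mem_range] at hp
    rw [Finset.mem_range]
    omega
  rw [← Finset.sum_fiberwise_of_maps_to hmaps]
  have hterm : ∀ s ∈ range (2 * k + 1),
      ∑ p ∈ (range (k + 1) ×ˢ range (k + 1)).filter (fun p => p.1 + p.2 = s), F (p.1 + p.2)
      = (((range (k + 1) ×ˢ range (k + 1)).filter (fun p => p.1 + p.2 = s)).card : ℝ) * F s := by
    intro s _
    have : ∀ p ∈ (range (k + 1) ×ˢ range (k + 1)).filter (fun p => p.1 + p.2 = s),
        F (p.1 + p.2) = F s := by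
      intro p hp
      rw [Finset.mem_filter] at hp
      rw [hp.2]
    rw [Finset.sum_congr rfl this, Finset.sum_const, nsmul_eq_mul]
  rw [Finset.sum_congr rfl hterm]
  have main : ∀ s ∈ range (2 * k + 1),
      (((range (k + 1) ×ˢ range (k + 1)).filter (fun p => p.1 + p.2 = s)).card : ℝ) * F s
      = ((s : ℝ) + 1) * F s := by
    intro s _
    by_cases hs : s ≤ k
    · have : (range (k + 1) ×ˢ range (k + 1)).filter (fun p => p.1 + p.2 = s)
          = Finset.HasAntidiagonal.antidiagonal s := by
        ext p
        rw [Finset.mem_filter, Finset.HasAntidiagonal.mem_antidiagonal, Finset.mem_product,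
          Finset.mem_range, Finset.mem_range]
        constructor
        · rintro ⟨_, h⟩; exact h
        · intro h; exact ⟨⟨by omega, by omega⟩, h⟩
      rw [this, Finset.Nat.card_antidiagonal]
      push_cast
      ring
    · rw [hF s (by omega), mul_zero, mul_zero]
  rw [Finset.sum_congr rfl main]
  -- both sides are sums of (s+1) * F s over different ranges; terms beyond k vanish
  have h1 : ∑ s ∈ range (2 * k + 1), ((s : ℝ) + 1) * F s
      = ∑ s ∈ range (k + 1), ((s : ℝ) + 1) * F s := by
    refine (Finset.sum_subset (Finset.range_subset_range.mpr (by omega)) ?_).symm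
    intro s hs hnot
    rw [Finset.mem_range] at hnot
    rw [hF s (by omega), mul_zero]
  have h2 : ∑ s ∈ range (k + 2), ((s : ℝ) + 1) * F s
      = ∑ s ∈ range (k + 1), ((s : ℝ) + 1) * F s := by
    refine (Finset.sum_subset (Finset.range_subset_range.mpr (by omega)) ?_).symm
    intro s hs hnot
    rw [Finset.mem_range] at hnot
    rw [hF s (by omega), mul_zero]
  rw [h1, h2]

lemma conv_Phi (k : ℕ) :
    ∑ i ∈ range (k + 1), (k.choose i : ℝ) * Phi i * Phi (k - i) = Psi k := by
  have expand : ∀ i ∈ range (k + 1), (k.choose i : ℝ) * Phi i * Phi (k - i)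
      = ∑ a ∈ range (k + 1), ∑ b ∈ range (k + 1),
          (-(2 : ℝ)⁻¹) ^ a * (-(2 : ℝ)⁻¹) ^ b *
            ((k.choose i : ℝ) * S i a * S (k - i) b) := by
    intro i hi
    rw [Finset.mem_range] at hi
    rw [← Phi_ext i k (by omega), ← Phi_ext (k - i) k (by omega)]
    rw [mul_assoc, Finset.sum_mul_sum]
    simp only [Finset.mul_sum]
    refine Finset.sum_congr rfl fun a _ => ?_
    refine Finset.sum_congr rfl fun b _ => ?_
    ring
  rw [Finset.sum_congr rfl expand, Finset.sum_comm]
  have swap2 : ∀ a ∈ range (k + 1),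
      ∑ i ∈ range (k + 1), ∑ b ∈ range (k + 1),
          (-(2 : ℝ)⁻¹) ^ a * (-(2 : ℝ)⁻¹) ^ b * ((k.choose i : ℝ) * S i a * S (k - i) b)
      = ∑ b ∈ range (k + 1), (-(2 : ℝ)⁻¹) ^ (a + b) * S k (a + b) := by
    intro a _
    rw [Finset.sum_comm]
    refine Finset.sum_congr rfl fun b _ => ?_
    rw [← S_conv k a b, Finset.mul_sum]
    refine Finset.sum_congr rfl fun i _ => ?_
    rw [pow_add]
    try ring
  rw [Finset.sum_congr rfl swap2]
  rw [square_sum k (fun m => (-(2 : ℝ)⁻¹) ^ m * S k m)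
    (fun m hm => by
      show (-(2 : ℝ)⁻¹) ^ m * S k m = 0
      rw [S_eq_zero_of_lt hm, mul_zero])]
  unfold Psi
  refine Finset.sum_congr rfl fun s _ => ?_
  ring

lemma Phi_rec (k : ℕ) : Phi (k + 1) = 2⁻¹ * Psi k - Phi k := by
  have hPhi : Phi (k + 1) = ∑ t ∈ range (k + 1),
      (-(2 : ℝ)⁻¹) ^ (t + 1) * (((t : ℝ) + 1) * (S k (t + 1) + S k t)) := by
    unfold Phi
    rw [Finset.sum_range_succ']
    have h0 : (-(2 : ℝ)⁻¹) ^ 0 * S (k + 1) 0 = 0 := by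
      rw [S_zero_right (Nat.succ_ne_zero k), mul_zero]
    rw [h0, add_zero]
    refine Finset.sum_congr rfl fun t _ => ?_
    rw [S_rec k t]
  rw [hPhi]
  have hsplit : ∑ t ∈ range (k + 1),
      (-(2 : ℝ)⁻¹) ^ (t + 1) * (((t : ℝ) + 1) * (S k (t + 1) + S k t))
      = (∑ t ∈ range (k + 1), (-(2 : ℝ)⁻¹) ^ (t + 1) * ((t : ℝ) + 1) * S k (t + 1))
      + ∑ t ∈ range (k + 1), (-(2 : ℝ)⁻¹) ^ (t + 1) * ((t : ℝ) + 1) * S k t := by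
    rw [← Finset.sum_add_distrib]
    refine Finset.sum_congr rfl fun t _ => ?_
    ring
  rw [hsplit]
  -- second sum = -(1/2) * Psi-like sum over range (k+1)
  have hsecond : ∑ t ∈ range (k + 1), (-(2 : ℝ)⁻¹) ^ (t + 1) * ((t : ℝ) + 1) * S k t
      = -(2 : ℝ)⁻¹ * ∑ t ∈ range (k + 2), (-(2 : ℝ)⁻¹) ^ t * ((t : ℝ) + 1) * S k t := by
    rw [Finset.sum_range_succ _ (k + 1), S_eq_zero_of_lt (by omega : k < k + 1), mul_zero,
      add_zero, Finset.mul_sum]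
    refine Finset.sum_congr rfl fun t _ => ?_
    rw [pow_succ]
    ring
  -- first sum: reindex
  have hfirst : ∑ t ∈ range (k + 1), (-(2 : ℝ)⁻¹) ^ (t + 1) * ((t : ℝ) + 1) * S k (t + 1)
      = ∑ m ∈ range (k + 2), (-(2 : ℝ)⁻¹) ^ m * (m : ℝ) * S k m := by
    rw [Finset.sum_range_succ' (fun m => (-(2 : ℝ)⁻¹) ^ m * (m : ℝ) * S k m) (k + 1)]
    simp only [Nat.cast_zero, mul_zero, zero_mul, add_zero]
    refine Finset.sum_congr rfl fun t _ => ?_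
    push_cast
    ring
  rw [hsecond, hfirst]
  have hMSm : ∑ m ∈ range (k + 2), (-(2 : ℝ)⁻¹) ^ m * (m : ℝ) * S k m
      = Psi k - Phi k := by
    unfold Psi
    rw [← Phi_ext k (k + 1) (by omega), ← Finset.sum_sub_distrib]
    refine Finset.sum_congr rfl fun m _ => ?_
    ring
  rw [hMSm]
  unfold Psi
  ring

theorem Phi_even_eq_zero : ∀ k, Even k → k ≠ 0 → Phi k = 0 := by
  intro k
  induction k using Nat.strong_induction_on with
  | _ k ih =>
    intro hke hk0
    match k, hk0 with
    | (K + 1), _ =>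
      have hKodd : ¬ Even K := by
        intro h
        exact (Nat.even_add_one.mp hke) h
      rw [Phi_rec, ← conv_Phi]
      have hK0 : K ≠ 0 := by
        intro h; rw [h] at hKodd; exact hKodd Even.zero
      have hmid : ∀ i ∈ range (K + 1), i ∉ ({0, K} : Finset ℕ) →
          (K.choose i : ℝ) * Phi i * Phi (K - i) = 0 := by
        intro i hi hnot
        rw [Finset.mem_range] at hi
        rw [Finset.mem_insert, Finset.mem_singleton] at hnot
        push_neg at hnot
        obtain ⟨h0, hK⟩ := hnot
        by_cases hie : Even i
        · rw [ih i (by omega) hie h0, mul_zero, zero_mul]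
        · have : Even (K - i) := by
            rcases Nat.even_or_odd K with h | h
            · exact absurd h hKodd
            · rcases Nat.even_or_odd i with h2 | h2
              · exact absurd h2 hie
              · exact Nat.Odd.sub_odd h h2
          rw [ih (K - i) (by omega) this (by omega), mul_zero]
      have hsub : ({0, K} : Finset ℕ) ⊆ range (K + 1) := by
        intro x hx
        rw [Finset.mem_insert, Finset.mem_singleton] at hx
        rw [Finset.mem_range]
        omega
      rw [← Finset.sum_subset hsub hmid]
      rw [Finset.sum_pair hK0.symm]
      simp only [Nat.choose_zero_right, Nat.choose_self, Nat.cast_one, one_mul,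
        Nat.sub_zero, Nat.sub_self]
      rw [Phi_zero]
      ring


/-- Functions with image `s` are equivalent to surjections onto `Fin s.card`. -/
noncomputable def fiberEquiv (n j : ℕ) (s : Finset (Fin j)) :
    {f : Fin n → Fin j // Finset.image f Finset.univ = s}
      ≃ {g : Fin n → Fin (s.card) // Function.Surjective g} where
  toFun := fun F => ⟨fun i => s.equivFin ⟨F.1 i, by
      have h := Finset.mem_image_of_mem F.1 (Finset.mem_univ i)
      rwa [F.2] at h⟩, by
    intro y
    have hy : (s.equivFin.symm y : Fin j) ∈ Finset.image F.1 Finset.univ := by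
      rw [F.2]; exact (s.equivFin.symm y).2
    obtain ⟨i, _, hi⟩ := Finset.mem_image.mp hy
    refine ⟨i, ?_⟩
    have heq : (⟨F.1 i, by
        have h := Finset.mem_image_of_mem F.1 (Finset.mem_univ i)
        rwa [F.2] at h⟩ :
        {x // x ∈ s}) = s.equivFin.symm y := Subtype.ext hi
    exact (congrArg s.equivFin heq).trans (Equiv.apply_symm_apply _ y)⟩
  invFun := fun G => ⟨fun i => (s.equivFin.symm (G.1 i) : Fin j), by
    ext x
    rw [Finset.mem_image]
    constructor
    · rintro ⟨i, _, rfl⟩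
      exact (s.equivFin.symm (G.1 i)).2
    · intro hx
      obtain ⟨i, hi⟩ := G.2 (s.equivFin ⟨x, hx⟩)
      exact ⟨i, Finset.mem_univ i, by rw [hi, Equiv.symm_apply_apply]⟩⟩
  left_inv := fun F => by
    apply Subtype.ext
    funext i
    simp
  right_inv := fun G => by
    apply Subtype.ext
    funext i
    simp

lemma card_fun_eq_sum_surj (n j : ℕ) :
    j ^ n = ∑ m ∈ range (j + 1),
      (j.choose m) * Nat.card {g : Fin n → Fin m // Function.Surjective g} := by
  classical
  have h1 : Fintype.card (Fin n → Fin j) = j ^ n := by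
    rw [Fintype.card_fun, Fintype.card_fin, Fintype.card_fin]
  have h2 : (Finset.univ : Finset (Fin n → Fin j)).card
      = ∑ s ∈ (Finset.univ : Finset (Fin j)).powerset,
          ((Finset.univ : Finset (Fin n → Fin j)).filter
            (fun f => Finset.image f Finset.univ = s)).card := by
    refine Finset.card_eq_sum_card_fiberwise ?_
    intro f _
    rw [Finset.mem_coe, Finset.mem_powerset]
    exact Finset.subset_univ _
  have h3 : ∀ s : Finset (Fin j),
      ((Finset.univ : Finset (Fin n → Fin j)).filter
        (fun f => Finset.image f Finset.univ = s)).card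
      = Nat.card {g : Fin n → Fin (s.card) // Function.Surjective g} := by
    intro s
    rw [← Fintype.card_subtype]
    rw [← Nat.card_eq_fintype_card]
    exact Nat.card_congr (fiberEquiv n j s)
  have h4 : ∑ s ∈ (Finset.univ : Finset (Fin j)).powerset,
        Nat.card {g : Fin n → Fin (s.card) // Function.Surjective g}
      = ∑ m ∈ range (j + 1),
        (j.choose m) * Nat.card {g : Fin n → Fin m // Function.Surjective g} := by
    rw [Finset.sum_powerset_apply_card
      (fun m => Nat.card {g : Fin n → Fin m // Function.Surjective g})]
    rw [Finset.card_univ, Fintype.card_fin]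
    refine Finset.sum_congr rfl fun m _ => ?_
    rw [smul_eq_mul]
  calc j ^ n = (Finset.univ : Finset (Fin n → Fin j)).card := by
        rw [← h1, Finset.card_univ]
    _ = _ := by
        rw [h2, Finset.sum_congr rfl fun s _ => h3 s, h4]


/-- The surjection count equals the algebraic count. -/
lemma card_surj_eq_S (n : ℕ) : ∀ m : ℕ,
    (Nat.card {g : Fin n → Fin m // Function.Surjective g} : ℝ) = S n m := by
  intro m
  induction m using Nat.strong_induction_on with
  | _ m ih =>
    have h1 : ((m : ℝ)) ^ n = ∑ t ∈ range (m + 1),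
        (m.choose t : ℝ) * (Nat.card {g : Fin n → Fin t // Function.Surjective g} : ℝ) := by
      have := congrArg (fun z : ℕ => (z : ℝ)) (card_fun_eq_sum_surj n m)
      push_cast at this
      exact this
    have h2 := sum_choose_S n m
    rw [Finset.sum_range_succ] at h1 h2
    rw [Nat.choose_self, Nat.cast_one, one_mul] at h1 h2
    have h3 : ∑ t ∈ range m, (m.choose t : ℝ) *
        (Nat.card {g : Fin n → Fin t // Function.Surjective g} : ℝ)
        = ∑ t ∈ range m, (m.choose t : ℝ) * S n t := by
      refine Finset.sum_congr rfl fun t ht => ?_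
      rw [Finset.mem_range] at ht
      rw [ih t ht]
    rw [h3] at h1
    linarith


end PermEC


/-- The number of `k`-faces per `d`-cell in the permutahedral tessellation:
`c_k(d) = (number of surjections from Fin(d+1) onto Fin(d+1-k)) / (d+1-k)`. -/
noncomputable def permFaceCount (d k : ℕ) : ℝ :=
  (Nat.card {f : Fin (d + 1) → Fin (d + 1 - k) // Function.Surjective f} : ℝ) /
    ((d + 1 - k : ℕ) : ℝ)

theorem permutahedral_ec_curve_vanishes_at_half (d : ℕ) (hd : 2 ≤ d) (hde : Even d) :
    ∑ k ∈ Finset.range (d + 1),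
      (-1 : ℝ) ^ k * permFaceCount d k * (1 - ((2 : ℝ) ^ (d + 1 - k))⁻¹) = 0 := by
  classical
  have hPhi : PermEC.Phi d = 0 := PermEC.Phi_even_eq_zero d hde (by omega)
  -- reflect the sum: k = d - t
  rw [← Finset.sum_range_reflect]
  simp only [Nat.add_sub_cancel]
  have hterm : ∀ t ∈ range (d + 1),
      (-1 : ℝ) ^ (d - t) * permFaceCount d (d - t) * (1 - ((2 : ℝ) ^ (d + 1 - (d - t)))⁻¹)
      = (-1 : ℝ) ^ t * (PermEC.S d (t + 1) + PermEC.S d t) * (1 - ((2 : ℝ) ^ (t + 1))⁻¹) := by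
    intro t ht
    rw [Finset.mem_range] at ht
    have hidx : d + 1 - (d - t) = t + 1 := by omega
    have hsgn : (-1 : ℝ) ^ (d - t) = (-1 : ℝ) ^ t := by
      have hparity : (-1 : ℝ) ^ (d - t) * (-1 : ℝ) ^ t = 1 := by
        rw [← pow_add]
        have : d - t + t = d := by omega
        rw [this]
        exact Even.neg_one_pow hde
      have h2 : ((-1 : ℝ) ^ t) * ((-1 : ℝ) ^ t) = 1 := by
        rw [← pow_add]
        exact Even.neg_one_pow ⟨t, by ring⟩
      linear_combination ((-1 : ℝ) ^ t) * hparity - ((-1 : ℝ) ^ (d - t)) * h2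
    have hPFC : permFaceCount d (d - t) = PermEC.S d (t + 1) + PermEC.S d t := by
      unfold permFaceCount
      rw [hidx, PermEC.card_surj_eq_S (d + 1) (t + 1)]
      have hd1 : d + 1 = d + 1 := rfl
      have : PermEC.S (d + 1) (t + 1) = ((t : ℝ) + 1) * (PermEC.S d (t + 1) + PermEC.S d t) :=
        PermEC.S_rec d t
      rw [this]
      have hne : ((t + 1 : ℕ) : ℝ) ≠ 0 := by positivity
      push_cast
      field_simp
    rw [hidx, hsgn, hPFC]
  rw [Finset.sum_congr rfl hterm]
  -- expand into four sums
  have hsplit : ∀ t ∈ range (d + 1),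
      (-1 : ℝ) ^ t * (PermEC.S d (t + 1) + PermEC.S d t) * (1 - ((2 : ℝ) ^ (t + 1))⁻¹)
      = ((-1 : ℝ) ^ t * PermEC.S d (t + 1) + (-1 : ℝ) ^ t * PermEC.S d t)
        - ((-(2 : ℝ)⁻¹) ^ (t + 1) * PermEC.S d (t + 1) * (-1)
          + (-(2 : ℝ)⁻¹) ^ (t + 1) * PermEC.S d t * (-1)) := by
    intro t _
    have h2 : ((2 : ℝ) ^ (t + 1))⁻¹ = ((2 : ℝ)⁻¹) ^ (t + 1) := by
      rw [← inv_pow]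
    rw [h2]
    have h3 : (-(2 : ℝ)⁻¹) ^ (t + 1) = (-1 : ℝ) ^ (t + 1) * ((2 : ℝ)⁻¹) ^ (t + 1) := by
      rw [← neg_one_mul, mul_pow]
    rw [h3, pow_succ]
    ring
  rw [Finset.sum_congr rfl hsplit]
  rw [Finset.sum_sub_distrib, Finset.sum_add_distrib, Finset.sum_add_distrib]
  -- Sum1 + Sum2 = 0
  have hS12 : (∑ t ∈ range (d + 1), (-1 : ℝ) ^ t * PermEC.S d (t + 1))
      + ∑ t ∈ range (d + 1), (-1 : ℝ) ^ t * PermEC.S d t = 0 := by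
    have hre : ∑ t ∈ range (d + 1), (-1 : ℝ) ^ t * PermEC.S d (t + 1)
        = -(∑ m ∈ range (d + 2), (-1 : ℝ) ^ m * PermEC.S d m) := by
      rw [Finset.sum_range_succ' (fun m => (-1 : ℝ) ^ m * PermEC.S d m) (d + 1)]
      rw [PermEC.S_zero_right (by omega : d ≠ 0)]
      rw [neg_add, ← Finset.sum_neg_distrib]
      simp only [pow_zero, one_mul, mul_zero, neg_zero, add_zero]
      refine Finset.sum_congr rfl fun t _ => ?_
      rw [pow_succ]
      ring
    rw [hre, Finset.sum_range_succ, PermEC.S_eq_zero_of_lt (by omega : d < d + 1), mul_zero,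
      add_zero]
    ring
  -- Sum3 + Sum4 = 0
  have hS34 : (∑ t ∈ range (d + 1), (-(2 : ℝ)⁻¹) ^ (t + 1) * PermEC.S d (t + 1) * (-1))
      + ∑ t ∈ range (d + 1), (-(2 : ℝ)⁻¹) ^ (t + 1) * PermEC.S d t * (-1) = 0 := by
    have h3 : ∑ t ∈ range (d + 1), (-(2 : ℝ)⁻¹) ^ (t + 1) * PermEC.S d (t + 1) * (-1)
        = -(∑ m ∈ range (d + 2), (-(2 : ℝ)⁻¹) ^ m * PermEC.S d m) := by
      rw [Finset.sum_range_succ' (fun m => (-(2 : ℝ)⁻¹) ^ m * PermEC.S d m) (d + 1)]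
      rw [PermEC.S_zero_right (by omega : d ≠ 0)]
      rw [neg_add, ← Finset.sum_neg_distrib]
      simp only [pow_zero, one_mul, mul_zero, neg_zero, add_zero]
      refine Finset.sum_congr rfl fun t _ => ?_
      ring
    have hext : ∑ m ∈ range (d + 2), (-(2 : ℝ)⁻¹) ^ m * PermEC.S d m = PermEC.Phi d := by
      unfold PermEC.Phi
      rw [Finset.sum_range_succ, PermEC.S_eq_zero_of_lt (by omega : d < d + 1), mul_zero,
        add_zero]
    have h4 : ∑ t ∈ range (d + 1), (-(2 : ℝ)⁻¹) ^ (t + 1) * PermEC.S d t * (-1)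
        = (2 : ℝ)⁻¹ * PermEC.Phi d := by
      unfold PermEC.Phi
      rw [Finset.mul_sum]
      refine Finset.sum_congr rfl fun t _ => ?_
      rw [pow_succ]
      ring
    rw [h3, hext, h4, hPhi]
    ring
  linarith [hS12, hS34]
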